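/- For all integers k ≥ 3 and t with 0 ≤ t ≤ 2^{k−2} − 2, the graph R_{k,t} has tree-depth exactly k. -/

import Mathlib

/-- A `k`-ranking of a simple graph `G`: a labeling of the vertices with values from
`{1, …, k}` such that every path joining two distinct vertices with the same label
contains a vertex with a strictly higher label. -/
def IsRanking {V : Type*} (G : SimpleGraph V) (k : ℕ) (f : V → ℕ) : Prop :=
  (∀ v, 1 ≤ f v ∧ f v ≤ k) ∧
  ∀ ⦃u v : V⦄ (p : G.Walk u v), p.IsPath → u ≠ v → f u = f v →
    ∃ w ∈ p.support, f u < f w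

/-- The tree-depth of `G`: the least `k` such that `G` admits a `k`-ranking. -/
noncomputable def treedepth {V : Type*} (G : SimpleGraph V) : ℕ :=
  sInf {k | ∃ f, IsRanking G k f}

/-- The graph `R_{k,t}`: a path `v_1, …, v_{2^{k-2}+1+t}` (vertex `v_i` is index `i - 1`
in `Fin (2^(k-2)+1+t)`) together with an added edge between `v_{t+1}` (index `t`) and
`v_{2^{k-2}+1}` (index `2^(k-2)`). -/
def Rgraph (k t : ℕ) : SimpleGraph (Fin (2 ^ (k - 2) + 1 + t)) :=
  SimpleGraph.fromRel (fun i j =>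
    i.val + 1 = j.val ∨ (i.val = t ∧ j.val = 2 ^ (k - 2)))


lemma loghalf {E sz : ℕ} (h1 : 1 ≤ sz) (h2 : E ≤ 2*sz+1) : Nat.log 2 E ≤ Nat.log 2 sz + 1 := by
  rcases Nat.eq_zero_or_pos E with rfl|hE
  · simp
  · have h3 : sz < 2 ^ (Nat.log 2 sz + 1) := Nat.lt_pow_succ_log_self (by norm_num) sz
    have h4 : E < 2 ^ (Nat.log 2 sz + 2) := by
      have : 2 ^ (Nat.log 2 sz + 2) = 2 * 2 ^ (Nat.log 2 sz + 1) := by ring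
      omega
    have := Nat.log_lt_of_lt_pow (by omega : E ≠ 0) h4
    omega

/-- Ruler lemma: a function with the "between two equal values there is a larger one"
property on an interval of size `s` attains a value `≥ log2 s + 1` there. -/
lemma ruler (F : ℕ → ℕ) : ∀ s x0, 1 ≤ s →
    (∀ i, x0 ≤ i → i < x0 + s → 1 ≤ F i) →
    (∀ x y, x0 ≤ x → x < y → y < x0 + s → F x = F y → ∃ z, x < z ∧ z < y ∧ F x < F z) →
    ∃ x, x0 ≤ x ∧ x < x0 + s ∧ Nat.log 2 s + 1 ≤ F x := by
  intro s
  induction s using Nat.strong_induction_on with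
  | _ s IH =>
  intro x0 hs hpos hrul
  by_cases hs1 : s = 1
  · subst hs1
    exact ⟨x0, le_refl _, by omega, by simpa using hpos x0 (le_refl _) (by omega)⟩
  have hs2 : 2 ≤ s := by omega
  obtain ⟨v, hv, hmax⟩ := (Finset.Ico x0 (x0+s)).exists_max_image F
    ⟨x0, by simp [Finset.mem_Ico]; omega⟩
  rw [Finset.mem_Ico] at hv
  have hmax' : ∀ x, x0 ≤ x → x < x0 + s → F x ≤ F v := fun x h1 h2 =>
    hmax x (Finset.mem_Ico.mpr ⟨h1, h2⟩)
  have hlogd : Nat.log 2 s = Nat.log 2 (s/2) + 1 := by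
    have h1 := Nat.log_div_base 2 s
    have h2 : 0 < Nat.log 2 s := Nat.log_pos (by norm_num) hs2
    omega
  -- helper: any x ≠ v in the interval has F x < F v
  have hlt : ∀ x, x0 ≤ x → x < x0 + s → x ≠ v → F x < F v := by
    intro x h1 h2 h3
    rcases lt_or_eq_of_le (hmax' x h1 h2) with h|h
    · exact h
    · exfalso
      rcases Nat.lt_or_ge x v with hxv|hxv
      · obtain ⟨z, hz1, hz2, hz3⟩ := hrul x v h1 hxv hv.2 h
        have := hmax' z (by omega) (by omega); omega
      · have hvx : v < x := by omega
        obtain ⟨z, hz1, hz2, hz3⟩ := hrul v x hv.1 hvx h2 h.symm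
        have := hmax' z (by omega) (by omega); omega
  have hside : s / 2 ≤ v - x0 ∨ s / 2 ≤ x0 + s - v - 1 := by omega
  have hfv : Nat.log 2 s + 1 ≤ F v := by
    rcases hside with hside|hside
    · have hsz : 1 ≤ v - x0 := by omega
      obtain ⟨x, hx1, hx2, hx3⟩ := IH (v - x0) (by omega) x0 hsz
        (fun i h1 h2 => hpos i h1 (by omega))
        (fun x y h1 h2 h3 h4 => hrul x y h1 h2 (by omega) h4)
      have hxlt := hlt x hx1 (by omega) (by omega)
      have hmono : Nat.log 2 (s/2) ≤ Nat.log 2 (v - x0) := Nat.log_mono_right hside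
      omega
    · have hsz : 1 ≤ x0 + s - v - 1 := by omega
      obtain ⟨x, hx1, hx2, hx3⟩ := IH (x0 + s - v - 1) (by omega) (v+1) hsz
        (fun i h1 h2 => hpos i (by omega) (by omega))
        (fun x y h1 h2 h3 h4 => hrul x y (by omega) h2 (by omega) h4)
      have hxlt := hlt x (by omega) (by omega) (by omega)
      have hmono : Nat.log 2 (s/2) ≤ Nat.log 2 (x0 + s - v - 1) := Nat.log_mono_right hside
      omega
  exact ⟨v, hv.1, hv.2, hfv⟩

lemma v2_le {x j : ℕ} (hx : 0 < x) (h : x ≤ 2^j) : x.factorization 2 ≤ j := by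
  have h1 : 2 ^ (x.factorization 2) ∣ x := Nat.ordProj_dvd x 2
  have h2 := Nat.le_of_dvd hx h1
  exact (Nat.pow_le_pow_iff_right (by norm_num : 1 < 2)).mp (le_trans h2 h)

lemma v2_ruler {a b : ℕ} (ha : 0 < a) (hab : a < b)
    (h : a.factorization 2 = b.factorization 2) :
    ∃ c, a < c ∧ c < b ∧ a.factorization 2 < c.factorization 2 := by
  have hb : 0 < b := by omega
  have h2a : 2 ^ (a.factorization 2) ∣ a := Nat.ordProj_dvd a 2
  have h2b : 2 ^ (a.factorization 2) ∣ b := by rw [h]; exact Nat.ordProj_dvd b 2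
  have haa : 2 ^ (a.factorization 2) * (a / 2 ^ (a.factorization 2)) = a :=
    Nat.mul_div_cancel' h2a
  have hbb : 2 ^ (a.factorization 2) * (b / 2 ^ (a.factorization 2)) = b :=
    Nat.mul_div_cancel' h2b
  have hoa : ¬ 2 ∣ (a / 2 ^ (a.factorization 2)) :=
    Nat.not_dvd_ordCompl Nat.prime_two (by omega : a ≠ 0)
  have hob : ¬ 2 ∣ (b / 2 ^ (a.factorization 2)) := by
    have := Nat.not_dvd_ordCompl Nat.prime_two (by omega : b ≠ 0)
    rw [← h] at this
    exact this
  have hpe : 0 < 2 ^ (a.factorization 2) := Nat.pow_pos (by norm_num)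
  have h1 : a / 2 ^ (a.factorization 2) < b / 2 ^ (a.factorization 2) := by
    by_contra hcon
    push_neg at hcon
    have := Nat.mul_le_mul_left (2 ^ (a.factorization 2)) hcon
    omega
  have hab' : a / 2 ^ (a.factorization 2) + 2 ≤ b / 2 ^ (a.factorization 2) := by omega
  have hx : 2 ^ (a.factorization 2) * (a / 2 ^ (a.factorization 2) + 1)
      = a + 2 ^ (a.factorization 2) := by rw [Nat.mul_add]; omega
  have hy : 2 ^ (a.factorization 2) * (a / 2 ^ (a.factorization 2) + 2)
      ≤ 2 ^ (a.factorization 2) * (b / 2 ^ (a.factorization 2)) :=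
    Nat.mul_le_mul_left _ hab'
  have hz : 2 ^ (a.factorization 2) * (a / 2 ^ (a.factorization 2) + 2)
      = a + 2 ^ (a.factorization 2) + 2 ^ (a.factorization 2) := by rw [Nat.mul_add]; omega
  refine ⟨2 ^ (a.factorization 2) * (a / 2 ^ (a.factorization 2) + 1), by omega, by omega, ?_⟩
  have hdvd : 2 ^ (a.factorization 2 + 1) ∣
      2 ^ (a.factorization 2) * (a / 2 ^ (a.factorization 2) + 1) := by
    have h2' : 2 ∣ a / 2 ^ (a.factorization 2) + 1 := by omega
    obtain ⟨c, hc⟩ := h2'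
    exact ⟨c, by rw [hc, pow_succ]; ring⟩
  have hne : 2 ^ (a.factorization 2) * (a / 2 ^ (a.factorization 2) + 1) ≠ 0 := by positivity
  have := (Nat.Prime.pow_dvd_iff_le_factorization Nat.prime_two hne).mp hdvd
  omega

open Finset in
/-- Spider lemma: lower bound for rankings of double spiders sitting inside `[0,n)`,
with centers `t` and `m` joined by an edge ("chord"). -/
lemma spider (n t m : ℕ) (F : ℕ → ℕ) (htm : t + 2 ≤ m) (hmn : m < n)
    (Hpos : ∀ i, i < n → 1 ≤ F i)
    (H1 : ∀ x y, x < y → y < n → F x = F y → ∃ z, x < z ∧ z < y ∧ F x < F z)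
    (H2 : ∀ x y, x < n → y < n → max x t < min m y → F x = F y →
        ∃ z, ((min x t ≤ z ∧ z ≤ max x t) ∨ (min m y ≤ z ∧ z ≤ max m y)) ∧ F x < F z) :
    ∀ s a b c d, a + b + c + d ≤ s → a ≤ t → c + (t + b) + 2 ≤ m → m + d < n →
    ∃ x, ((t - a ≤ x ∧ x ≤ t + b) ∨ (m - c ≤ x ∧ x ≤ m + d)) ∧
      Nat.log 2 (max a b + max c d + 2 + min (min a b) (min c d)) + 1 ≤ F x := by
  intro s
  induction s using Nat.strong_induction_on with
  | _ s IH =>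
  intro a b c d hsum ha hbc hd
  set E := max a b + max c d + 2 + min (min a b) (min c d) with hE
  have hE2 : 2 ≤ E := by omega
  have hSn : ∀ x, ((t - a ≤ x ∧ x ≤ t + b) ∨ (m - c ≤ x ∧ x ≤ m + d)) → x < n := by
    intro x hx; omega
  obtain ⟨v, hvS, hmax⟩ := (Icc (t-a) (t+b) ∪ Icc (m-c) (m+d)).exists_max_image F
    ⟨t, by simp only [mem_union, mem_Icc]; omega⟩
  have hmem : ∀ x, ((t - a ≤ x ∧ x ≤ t + b) ∨ (m - c ≤ x ∧ x ≤ m + d)) ↔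
      x ∈ Icc (t-a) (t+b) ∪ Icc (m-c) (m+d) := by
    intro x; simp only [mem_union, mem_Icc]
  have hvmem : (t - a ≤ v ∧ v ≤ t + b) ∨ (m - c ≤ v ∧ v ≤ m + d) := (hmem v).mpr hvS
  have hmax' : ∀ x, ((t - a ≤ x ∧ x ≤ t + b) ∨ (m - c ≤ x ∧ x ≤ m + d)) → F x ≤ F v :=
    fun x hx => hmax x ((hmem x).mp hx)
  -- uniqueness of the maximum on the spider
  have hlt : ∀ x, ((t - a ≤ x ∧ x ≤ t + b) ∨ (m - c ≤ x ∧ x ≤ m + d)) → x ≠ v → F x < F v := by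
    intro x hx hxv
    rcases lt_or_eq_of_le (hmax' x hx) with h|h
    · exact h
    exfalso
    have key : ∀ x y, ((t - a ≤ x ∧ x ≤ t + b) ∨ (m - c ≤ x ∧ x ≤ m + d)) →
        ((t - a ≤ y ∧ y ≤ t + b) ∨ (m - c ≤ y ∧ y ≤ m + d)) → x ≠ y → F x = F y →
        ∃ z, ((t - a ≤ z ∧ z ≤ t + b) ∨ (m - c ≤ z ∧ z ≤ m + d)) ∧ F x < F z := by
      intro x y hx hy hxy hF
      rcases hx with hx|hx <;> rcases hy with hy|hy
      · -- both on t-side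
        rcases Nat.lt_or_ge x y with hlt'|hge
        · obtain ⟨z, hz1, hz2, hz3⟩ := H1 x y hlt' (by omega) hF
          exact ⟨z, by omega, hz3⟩
        · obtain ⟨z, hz1, hz2, hz3⟩ := H1 y x (by omega) (by omega) hF.symm
          exact ⟨z, by omega, by omega⟩
      · -- x on t-side, y on m-side
        obtain ⟨z, hz1, hz2⟩ := H2 x y (by omega) (by omega) (by omega) hF
        exact ⟨z, by omega, hz2⟩
      · -- x on m-side, y on t-side
        obtain ⟨z, hz1, hz2⟩ := H2 y x (by omega) (by omega) (by omega) hF.symm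
        exact ⟨z, by omega, by omega⟩
      · rcases Nat.lt_or_ge x y with hlt'|hge
        · obtain ⟨z, hz1, hz2, hz3⟩ := H1 x y hlt' (by omega) hF
          exact ⟨z, by omega, hz3⟩
        · obtain ⟨z, hz1, hz2, hz3⟩ := H1 y x (by omega) (by omega) hF.symm
          exact ⟨z, by omega, by omega⟩
    obtain ⟨z, hz1, hz2⟩ := key x v hx hvmem hxv h
    have := hmax' z hz1; omega
  refine ⟨v, hvmem, ?_⟩
  -- helper to conclude from a path component of size sz avoiding v
  have close : ∀ x0 sz, 1 ≤ sz → x0 + sz ≤ n → E ≤ 2*sz + 1 →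
      (∀ x, x0 ≤ x → x < x0 + sz →
        ((t - a ≤ x ∧ x ≤ t + b) ∨ (m - c ≤ x ∧ x ≤ m + d)) ∧ x ≠ v) →
      Nat.log 2 E + 1 ≤ F v := by
    intro x0 sz h1 h2 h3 hin
    obtain ⟨x, hx1, hx2, hx3⟩ := ruler F sz x0 h1
      (fun i hi1 hi2 => Hpos i (by omega))
      (fun x y hy1 hy2 hy3 hy4 => H1 x y hy2 (by omega) hy4)
    have hxv := hlt x (hin x hx1 hx2).1 (hin x hx1 hx2).2
    have := loghalf h1 h3
    omega
  rcases hvmem with ⟨hv1, hv2⟩|⟨hv1, hv2⟩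
  · rcases Nat.lt_trichotomy v t with hvt|hvt|hvt
    · -- v on left leg (leg a), v = t - i with 1 ≤ i ≤ a
      set E' := max (t - v - 1) b + max c d + 2 + min (min (t - v - 1) b) (min c d) with hE'
      have harith : E ≤ 2 * (a - (t - v)) + 1 ∨ E ≤ 2 * E' + 1 := by omega
      rcases harith with h|h
      · exact close (t - a) (a - (t - v)) (by omega) (by omega) h (fun x h1 h2 => by omega)
      · obtain ⟨x, hx1, hx2⟩ := IH (t - v - 1 + b + c + d) (by omega) (t - v - 1) b c d
          (le_refl _) (by omega) (by omega) hd
        rw [← hE'] at hx2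
        have hxv := hlt x (by omega) (by omega)
        have := loghalf (show 1 ≤ E' by omega) h
        omega
    · -- v = t
      subst hvt
      have harith : E ≤ 2 * a + 1 ∨ E ≤ 2 * b + 1 ∨ E ≤ 2 * (c + d + 1) + 1 := by omega
      rcases harith with h|h|h
      · exact close (v - a) a (by omega) (by omega) h (fun x h1 h2 => by omega)
      · exact close (v + 1) b (by omega) (by omega) h (fun x h1 h2 => by omega)
      · exact close (m - c) (c + d + 1) (by omega) (by omega) h (fun x h1 h2 => by omega)
    · -- v on leg b, v = t + i
      set E' := max a (v - t - 1) + max c d + 2 + min (min a (v - t - 1)) (min c d) with hE'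
      have harith : E ≤ 2 * (t + b - v) + 1 ∨ E ≤ 2 * E' + 1 := by omega
      rcases harith with h|h
      · exact close (v + 1) (t + b - v) (by omega) (by omega) h (fun x h1 h2 => by omega)
      · obtain ⟨x, hx1, hx2⟩ := IH (a + (v - t - 1) + c + d) (by omega) a (v - t - 1) c d
          (le_refl _) ha (by omega) hd
        rw [← hE'] at hx2
        have hxv := hlt x (by omega) (by omega)
        have := loghalf (show 1 ≤ E' by omega) h
        omega
  · rcases Nat.lt_trichotomy v m with hvm|hvm|hvm
    · -- v on leg c
      set E' := max a b + max (m - v - 1) d + 2 + min (min a b) (min (m - v - 1) d) with hE'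
      have harith : E ≤ 2 * (c - (m - v)) + 1 ∨ E ≤ 2 * E' + 1 := by omega
      rcases harith with h|h
      · exact close (m - c) (c - (m - v)) (by omega) (by omega) h (fun x h1 h2 => by omega)
      · obtain ⟨x, hx1, hx2⟩ := IH (a + b + (m - v - 1) + d) (by omega) a b (m - v - 1) d
          (le_refl _) ha (by omega) hd
        rw [← hE'] at hx2
        have hxv := hlt x (by omega) (by omega)
        have := loghalf (show 1 ≤ E' by omega) h
        omega
    · -- v = m
      subst hvm
      have harith : E ≤ 2 * (a + b + 1) + 1 ∨ E ≤ 2 * c + 1 ∨ E ≤ 2 * d + 1 := by omega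
      rcases harith with h|h|h
      · exact close (t - a) (a + b + 1) (by omega) (by omega) h (fun x h1 h2 => by omega)
      · exact close (v - c) c (by omega) (by omega) h (fun x h1 h2 => by omega)
      · exact close (v + 1) d (by omega) (by omega) h (fun x h1 h2 => by omega)
    · -- v on leg d
      set E' := max a b + max c (v - m - 1) + 2 + min (min a b) (min c (v - m - 1)) with hE'
      have harith : E ≤ 2 * (m + d - v) + 1 ∨ E ≤ 2 * E' + 1 := by omega
      rcases harith with h|h
      · exact close (v + 1) (m + d - v) (by omega) (by omega) h (fun x h1 h2 => by omega)
      · obtain ⟨x, hx1, hx2⟩ := IH (a + b + c + (v - m - 1)) (by omega) a b c (v - m - 1)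
          (le_refl _) ha (by omega) (by omega)
        rw [← hE'] at hx2
        have hxv := hlt x (by omega) (by omega)
        have := loghalf (show 1 ≤ E' by omega) h
        omega
section walks
variable {k t : ℕ}

local notation "N" => 2 ^ (k - 2) + 1 + t
local notation "M" => 2 ^ (k - 2)

lemma adj_consec (i : ℕ) (h : i + 1 < N) :
    (Rgraph k t).Adj ⟨i, by omega⟩ ⟨i+1, h⟩ := by
  rw [Rgraph, SimpleGraph.fromRel_adj]
  exact ⟨by simp [Fin.ext_iff], Or.inl (Or.inl rfl)⟩

lemma adj_chord (htM : t ≠ M) (h1 : t < N) (h2 : M < N) :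
    (Rgraph k t).Adj ⟨t, h1⟩ ⟨M, h2⟩ := by
  rw [Rgraph, SimpleGraph.fromRel_adj]
  refine ⟨?_, Or.inl (Or.inr ⟨rfl, rfl⟩)⟩
  simp only [ne_eq, Fin.mk.injEq]
  omega

lemma straight (x d : ℕ) (h : x + d < N) :
    ∃ p : (Rgraph k t).Walk ⟨x, by omega⟩ ⟨x + d, h⟩,
      (∀ z : Fin N, z ∈ p.support ↔ x ≤ z.val ∧ z.val ≤ x + d) ∧ p.support.Nodup := by
  induction d with
  | zero =>
    refine ⟨SimpleGraph.Walk.nil, ?_, by simp⟩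
    intro z
    simp [Fin.ext_iff]
    omega
  | succ d ih =>
    obtain ⟨p, hmem, hnd⟩ := ih (by omega)
    have hnew : (⟨x + (d+1), h⟩ : Fin N) ∉ p.support := by
      intro hz
      have := (hmem _).mp hz
      simp only [Fin.val_mk] at this
      omega
    refine ⟨p.concat (adj_consec (x + d) h), ?_, ?_⟩
    · intro z
      rw [SimpleGraph.Walk.support_concat, List.mem_append]
      simp only [List.mem_singleton, hmem]
      constructor
      · rintro (h'|rfl)
        · omega
        · simp only [Fin.val_mk]; omega
      · intro h'
        rcases Nat.lt_or_ge z.val (x + d + 1) with h''|h''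
        · exact Or.inl ⟨h'.1, by omega⟩
        · right; apply Fin.ext; simp only [Fin.val_mk]; omega
    · rw [SimpleGraph.Walk.support_concat]
      refine List.Nodup.append hnd (List.nodup_singleton _) ?_
      intro z hz hz'
      simp only [List.mem_singleton] at hz'
      subst hz'
      exact hnew hz

lemma between (a b : ℕ) (ha : a < N) (hb : b < N) :
    ∃ p : (Rgraph k t).Walk ⟨a, ha⟩ ⟨b, hb⟩,
      (∀ z : Fin N, z ∈ p.support ↔ min a b ≤ z.val ∧ z.val ≤ max a b) ∧ p.support.Nodup := by
  rcases Nat.le_total a b with h|h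
  · obtain ⟨p, hmem, hnd⟩ := straight (k := k) (t := t) a (b - a) (by omega)
    have he : (⟨a + (b - a), by omega⟩ : Fin N) = ⟨b, hb⟩ := by
      simp only [Fin.mk.injEq]; omega
    refine ⟨p.copy rfl he, ?_, ?_⟩
    · intro z
      rw [SimpleGraph.Walk.support_copy, hmem]
      omega
    · rw [SimpleGraph.Walk.support_copy]; exact hnd
  · obtain ⟨p, hmem, hnd⟩ := straight (k := k) (t := t) b (a - b) (by omega)
    have he : (⟨b + (a - b), by omega⟩ : Fin N) = ⟨a, ha⟩ := by
      simp only [Fin.mk.injEq]; omega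
    refine ⟨(p.copy rfl he).reverse, ?_, ?_⟩
    · intro z
      rw [SimpleGraph.Walk.support_reverse, List.mem_reverse,
        SimpleGraph.Walk.support_copy, hmem]
      omega
    · rw [SimpleGraph.Walk.support_reverse, List.nodup_reverse,
        SimpleGraph.Walk.support_copy]
      exact hnd

lemma chordw (x y : ℕ) (hx : x < N) (hy : y < N) (hM : M < N)
    (hcond : max x t < min M y) :
    ∃ p : (Rgraph k t).Walk ⟨x, hx⟩ ⟨y, hy⟩,
      (∀ z : Fin N, z ∈ p.support ↔
        ((min x t ≤ z.val ∧ z.val ≤ max x t) ∨ (min M y ≤ z.val ∧ z.val ≤ max M y))) ∧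
      p.support.Nodup := by
  have ht' : t < N := by omega
  obtain ⟨p1, hmem1, hnd1⟩ := between (k := k) (t := t) x t hx ht'
  obtain ⟨p2, hmem2, hnd2⟩ := between (k := k) (t := t) M y hM hy
  refine ⟨p1.append (SimpleGraph.Walk.cons (adj_chord (by omega) ht' hM) p2), ?_, ?_⟩
  · intro z
    rw [SimpleGraph.Walk.mem_support_append_iff, SimpleGraph.Walk.support_cons]
    simp only [List.mem_cons, hmem1, hmem2, Fin.ext_iff, Fin.val_mk]
    omega
  · rw [SimpleGraph.Walk.support_append, SimpleGraph.Walk.support_cons, List.tail_cons]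
    refine List.Nodup.append hnd1 hnd2 ?_
    intro z hz1 hz2
    have h1 := (hmem1 z).mp hz1
    have h2 := (hmem2 z).mp hz2
    omega
lemma no_small_ranking (hk : 3 ≤ k) (ht : t + 2 ≤ M) :
    ¬ ∃ f, IsRanking (Rgraph k t) (k-1) f := by
  rintro ⟨f, hbd, hrk⟩
  have hM2 : 2 ≤ M := by
    calc 2 = 2^1 := rfl
    _ ≤ M := Nat.pow_le_pow_right (by norm_num) (by omega)
  set F : ℕ → ℕ := fun i => if h : i < N then f ⟨i, h⟩ else 1 with hFdef
  have hFeq : ∀ i (h : i < N), F i = f ⟨i, h⟩ := fun i h => dif_pos h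
  have Hpos : ∀ i, i < N → 1 ≤ F i := by
    intro i h; rw [hFeq i h]; exact (hbd _).1
  have Hub : ∀ i, i < N → F i ≤ k - 1 := by
    intro i h; rw [hFeq i h]; exact (hbd _).2
  have H1 : ∀ x y, x < y → y < N → F x = F y → ∃ z, x < z ∧ z < y ∧ F x < F z := by
    intro x y hxy hyn hF
    have hxn : x < N := by omega
    obtain ⟨p, hmem, hnd⟩ := between (k := k) (t := t) x y hxn hyn
    have hne : (⟨x, hxn⟩ : Fin N) ≠ ⟨y, hyn⟩ := by simp only [ne_eq, Fin.mk.injEq]; omega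
    rw [hFeq x hxn, hFeq y hyn] at hF
    obtain ⟨w, hw, hfw⟩ := hrk p ((SimpleGraph.Walk.isPath_def p).mpr hnd) hne hF
    have hwv := (hmem w).mp hw
    have hwx : w.val ≠ x := by
      intro h
      rw [show w = ⟨x, hxn⟩ from Fin.ext h] at hfw
      exact lt_irrefl _ hfw
    have hwy : w.val ≠ y := by
      intro h
      rw [show w = ⟨y, hyn⟩ from Fin.ext h, ← hF] at hfw
      exact lt_irrefl _ hfw
    refine ⟨w.val, by omega, by omega, ?_⟩
    rw [hFeq x hxn, hFeq w.val (by omega)]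
    have : (⟨w.val, by omega⟩ : Fin N) = w := Fin.eta w _
    rw [this]; exact hfw
  have H2 : ∀ x y, x < N → y < N → max x t < min M y → F x = F y →
      ∃ z, ((min x t ≤ z ∧ z ≤ max x t) ∨ (min M y ≤ z ∧ z ≤ max M y)) ∧ F x < F z := by
    intro x y hxn hyn hcond hF
    obtain ⟨p, hmem, hnd⟩ := chordw (k := k) (t := t) x y hxn hyn (by omega) hcond
    have hne : (⟨x, hxn⟩ : Fin N) ≠ ⟨y, hyn⟩ := by simp only [ne_eq, Fin.mk.injEq]; omega
    rw [hFeq x hxn, hFeq y hyn] at hF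
    obtain ⟨w, hw, hfw⟩ := hrk p ((SimpleGraph.Walk.isPath_def p).mpr hnd) hne hF
    have hwv := (hmem w).mp hw
    refine ⟨w.val, hwv, ?_⟩
    rw [hFeq x hxn, hFeq w.val (by omega)]
    have : (⟨w.val, by omega⟩ : Fin N) = w := Fin.eta w _
    rw [this]; exact hfw
  -- step 1 : a vertex with label k-1 exists
  have hlogN : k - 2 ≤ Nat.log 2 N :=
    (Nat.le_log_iff_pow_le one_lt_two (by omega)).mpr (by omega)
  obtain ⟨u0, hu1, hu2, hu3⟩ := ruler F N 0 (by omega)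
    (fun i h1 h2 => Hpos i (by omega)) (fun x y h1 h2 h3 h4 => H1 x y h2 (by omega) h4)
  have hu2' : u0 < N := by omega
  have hFu : k - 1 ≤ F u0 := by omega
  -- step 2 : every other vertex has label ≤ k-2
  have hlogM : Nat.log 2 M = k - 2 := Nat.log_pow one_lt_two _
  have huniq : ∀ x, x < N → x ≠ u0 → F x ≤ k - 2 := by
    intro x hxn hxu
    by_contra hcon
    have h1 : F x = F u0 := by have := Hub x hxn; have := Hub u0 hu2'; omega
    rcases Nat.lt_or_ge x u0 with h|h
    · obtain ⟨z, hz1, hz2, hz3⟩ := H1 x u0 h hu2' h1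
      have := Hub z (by omega); omega
    · obtain ⟨z, hz1, hz2, hz3⟩ := H1 u0 x (by omega) hxn h1.symm
      have := Hub z (by omega); omega
  -- step 3 : case analysis on the position of u0
  rcases show u0 ≤ t ∨ M ≤ u0 ∨ (t < u0 ∧ u0 < M) by omega with hu|hu|⟨hul, hur⟩
  · obtain ⟨x, hx1, hx2, hx3⟩ := ruler F (N - u0 - 1) (u0 + 1) (by omega)
      (fun i h1 h2 => Hpos i (by omega)) (fun x y h1 h2 h3 h4 => H1 x y h2 (by omega) h4)
    have hmono : Nat.log 2 M ≤ Nat.log 2 (N - u0 - 1) := Nat.log_mono_right (by omega)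
    have := huniq x (by omega) (by omega)
    omega
  · obtain ⟨x, hx1, hx2, hx3⟩ := ruler F u0 0 (by omega)
      (fun i h1 h2 => Hpos i (by omega)) (fun x y h1 h2 h3 h4 => H1 x y h2 (by omega) h4)
    have hmono : Nat.log 2 M ≤ Nat.log 2 u0 := Nat.log_mono_right (by omega)
    have := huniq x (by omega) (by omega)
    omega
  · obtain ⟨x, hx1, hx2⟩ := spider N t M F ht (by omega) Hpos H1 H2
      (t + (u0 - 1 - t) + (M - 1 - u0) + t) t (u0 - 1 - t) (M - 1 - u0) t
      (le_refl _) (le_refl _) (by omega) (by omega)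
    have hEM : M ≤ max t (u0 - 1 - t) + max (M - 1 - u0) t + 2 +
        min (min t (u0 - 1 - t)) (min (M - 1 - u0) t) := by omega
    have hmono : Nat.log 2 M ≤ Nat.log 2 (max t (u0 - 1 - t) + max (M - 1 - u0) t + 2 +
        min (min t (u0 - 1 - t)) (min (M - 1 - u0) t)) := Nat.log_mono_right hEM
    have := huniq x (by omega) (by omega)
    omega

lemma ivt (hM : M < N) {u v : Fin N} (p : (Rgraph k t).Walk u v)
    (hns : (⟨M, hM⟩ : Fin N) ∉ p.support) :
    ∀ x, min u.val v.val ≤ x → x ≤ max u.val v.val → ∃ z ∈ p.support, z.val = x := by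
  induction p with
  | nil =>
    intro x h1 h2
    exact ⟨_, SimpleGraph.Walk.start_mem_support _, by omega⟩
  | @cons u w v hadj q ih =>
    rw [SimpleGraph.Walk.support_cons] at hns
    simp only [List.mem_cons, not_or] at hns
    obtain ⟨hnu, hnq⟩ := hns
    intro x h1 h2
    rw [Rgraph, SimpleGraph.fromRel_adj] at hadj
    have hstep : u.val + 1 = w.val ∨ w.val + 1 = u.val := by
      rcases hadj.2 with (h|⟨h1', h2'⟩)|(h|⟨h1', h2'⟩)
      · exact Or.inl h
      · exact absurd ((show w = ⟨M, hM⟩ from Fin.ext h2') ▸ q.start_mem_support)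
          (fun hc => hnq hc)
      · exact Or.inr h
      · exact absurd (show (⟨M, hM⟩ : Fin N) = u from (Fin.ext h2').symm) hnu
    by_cases hxu : x = u.val
    · exact ⟨u, by simp, hxu.symm⟩
    · obtain ⟨z, hz1, hz2⟩ := ih hnq x (by omega) (by omega)
      exact ⟨z, by rw [SimpleGraph.Walk.support_cons]; exact List.mem_cons_of_mem _ hz1, hz2⟩

def upr : Fin N → ℕ := fun z =>
  if z.val = M then k else
  if z.val < M then (z.val + 1).factorization 2 + 1
  else (z.val - M).factorization 2 + 1

lemma upr_M (h : M < N) : upr (k := k) (t := t) ⟨M, h⟩ = k := if_pos rfl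

lemma upr_lt {z : Fin N} (h : z.val < M) :
    upr (k := k) (t := t) z = (z.val + 1).factorization 2 + 1 := by
  rw [upr, if_neg (by omega), if_pos h]

lemma upr_gt {z : Fin N} (h : M < z.val) :
    upr (k := k) (t := t) z = (z.val - M).factorization 2 + 1 := by
  rw [upr, if_neg (by omega), if_neg (by omega)]

lemma upr_le {z : Fin N} (hk : 3 ≤ k) (ht : t + 2 ≤ M) (h : z.val ≠ M) :
    upr (k := k) (t := t) z ≤ k - 1 := by
  rcases Nat.lt_or_ge z.val M with h'|h'
  · rw [upr_lt h']
    have := v2_le (x := z.val + 1) (j := k - 2) (by omega) (by omega)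
    omega
  · have h'' : M < z.val := by omega
    rw [upr_gt h'']
    have hz2 := z.2
    have := v2_le (x := z.val - M) (j := k - 2) (by omega) (by omega)
    omega

lemma upper_ranking (hk : 3 ≤ k) (ht : t + 2 ≤ M) :
    IsRanking (Rgraph k t) k (upr (k := k) (t := t)) := by
  have hMN : M < N := by omega
  constructor
  · intro z
    constructor
    · rw [upr]; split <;> [omega; skip]; split <;> omega
    · by_cases h : z.val = M
      · rw [show z = ⟨M, hMN⟩ from Fin.ext h, upr_M]
      · have := upr_le hk ht h; omega
  · intro u v p hp hne hfeq
    have huM : u.val ≠ M := by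
      intro h
      have hvM : v.val ≠ M := fun h' => hne (Fin.ext (by omega))
      have h1 : upr (k := k) (t := t) u = k := by rw [show u = ⟨M, hMN⟩ from Fin.ext h, upr_M]
      have h2 := upr_le hk ht hvM
      omega
    have hvM : v.val ≠ M := by
      intro h
      have h1 : upr (k := k) (t := t) v = k := by rw [show v = ⟨M, hMN⟩ from Fin.ext h, upr_M]
      have h2 := upr_le hk ht huM
      omega
    by_cases hm : (⟨M, hMN⟩ : Fin N) ∈ p.support
    · refine ⟨⟨M, hMN⟩, hm, ?_⟩
      rw [upr_M]
      have := upr_le hk ht huM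
      omega
    · have hiv := ivt hMN p hm
      have hside : (u.val < M ∧ v.val < M) ∨ (M < u.val ∧ M < v.val) := by
        by_contra hcon
        have h1 : min u.val v.val ≤ M ∧ M ≤ max u.val v.val := by omega
        obtain ⟨z, hz1, hz2⟩ := hiv M h1.1 h1.2
        exact hm ((show z = ⟨M, hMN⟩ from Fin.ext hz2) ▸ hz1)
      have hval : u.val ≠ v.val := fun h => hne (Fin.ext h)
      rcases hside with ⟨h1, h2⟩|⟨h1, h2⟩
      · rw [upr_lt h1, upr_lt h2] at hfeq
        rcases Nat.lt_or_gt_of_ne hval with h|h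
        · obtain ⟨c, hc1, hc2, hc3⟩ := v2_ruler (a := u.val + 1) (b := v.val + 1) (by omega) (by omega) (by omega)
          obtain ⟨z, hz1, hz2⟩ := hiv (c - 1) (by omega) (by omega)
          refine ⟨z, hz1, ?_⟩
          rw [upr_lt (by omega : z.val < M), upr_lt h1, hz2,
            show c - 1 + 1 = c by omega]
          omega
        · obtain ⟨c, hc1, hc2, hc3⟩ := v2_ruler (a := v.val + 1) (b := u.val + 1) (by omega) (by omega) (by omega)
          obtain ⟨z, hz1, hz2⟩ := hiv (c - 1) (by omega) (by omega)
          refine ⟨z, hz1, ?_⟩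
          rw [upr_lt (by omega : z.val < M), upr_lt h1, hz2,
            show c - 1 + 1 = c by omega]
          omega
      · rw [upr_gt h1, upr_gt h2] at hfeq
        rcases Nat.lt_or_gt_of_ne hval with h|h
        · obtain ⟨c, hc1, hc2, hc3⟩ := v2_ruler (a := u.val - M) (b := v.val - M) (by omega) (by omega) (by omega)
          obtain ⟨z, hz1, hz2⟩ := hiv (c + M) (by omega) (by omega)
          refine ⟨z, hz1, ?_⟩
          rw [upr_gt (by omega : M < z.val), upr_gt h1, hz2,
            show c + M - M = c by omega]
          omega
        · obtain ⟨c, hc1, hc2, hc3⟩ := v2_ruler (a := v.val - M) (b := u.val - M) (by omega) (by omega) (by omega)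
          obtain ⟨z, hz1, hz2⟩ := hiv (c + M) (by omega) (by omega)
          refine ⟨z, hz1, ?_⟩
          rw [upr_gt (by omega : M < z.val), upr_gt h1, hz2,
            show c + M - M = c by omega]
          omega

end walks

/-- For `k ≥ 3` and `0 ≤ t ≤ 2^(k-2) − 2`, the graph `R_{k,t}` has tree-depth `k`. -/
theorem treedepth_Rgraph (k t : ℕ) (hk : 3 ≤ k) (ht : t ≤ 2 ^ (k - 2) - 2) :
    treedepth (Rgraph k t) = k := by
  have hM2 : 2 ≤ 2 ^ (k - 2) := by
    calc 2 = 2 ^ 1 := rfl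
    _ ≤ 2 ^ (k - 2) := Nat.pow_le_pow_right (by norm_num) (by omega)
  have ht' : t + 2 ≤ 2 ^ (k - 2) := by omega
  have hup : k ∈ {j | ∃ f, IsRanking (Rgraph k t) j f} :=
    ⟨upr (k := k) (t := t), upper_ranking hk ht'⟩
  refine le_antisymm (Nat.sInf_le hup) (le_csInf ⟨k, hup⟩ ?_)
  rintro j ⟨f, hf⟩
  by_contra hcon
  push_neg at hcon
  refine no_small_ranking hk ht' ⟨f, ?_, hf.2⟩
  exact fun v => ⟨(hf.1 v).1, le_trans (hf.1 v).2 (by omega)⟩
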